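/- Let f : ℝ^m → ℝ^n be additive up to a constant (f(x+y) = f(x) + f(y) + c for a fixed c ∈ ℝ^n, equivalently f − f(0) is additive), let S ⊆ ℝ^m, and let {X_t}_{t∈S} be a family of subsets of ℝ^n admitting a nesting direction L ⊆ S − S (so that for every a ∈ L and t ∈ S, t + a ∈ S and the nesting properties hold). If X = ⋃_{t∈S} (f(t) + X_t) contains no k-grid, then neither does Y = f(S) + ⋃_{t∈S} X_t: for every finite B ⊆ Y there is a translate B' = v + B with B' ⊆ X. -/
import Mathlib


/-- Proposition 5.20: let `f` be additive up to a constant `c`, `S ⊆ ℝ^m`, and let the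
family `{X_t}_{t ∈ S}` admit a nesting direction (formalised by its consequence: for
any finite lists `t_i, s_i ∈ S` there is `a` with `s_i + a ∈ S` and
`X_{t_i} ⊆ X_{s_i + a}` for all `i`). If `X = ⋃_{t ∈ S} (f(t) + X_t)` contains no
`k`-grid, then every finite subset of `Y = f(S) + ⋃_{t ∈ S} X_t` has a translate
contained in `X`, and `Y` contains no `k`-grid either. -/
theorem stmt19 {m r : ℕ} (d : Fin r → ℕ)
    (f : (Fin m → ℝ) → ((i : Fin r) → Fin (d i) → ℝ))
    (c : (i : Fin r) → Fin (d i) → ℝ)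
    (hf : ∀ x y : Fin m → ℝ, f (x + y) = f x + f y + c)
    (S : Set (Fin m → ℝ))
    (X : (Fin m → ℝ) → Set ((i : Fin r) → Fin (d i) → ℝ))
    (hnest : ∀ (l : ℕ) (t s : Fin l → Fin m → ℝ),
      (∀ i, t i ∈ S) → (∀ i, s i ∈ S) →
      ∃ a : Fin m → ℝ, (∀ i, s i + a ∈ S) ∧ ∀ i, X (t i) ⊆ X (s i + a))
    (k : ℕ)
    (XX YY : Set ((i : Fin r) → Fin (d i) → ℝ))
    (hXX : XX = {p | ∃ t ∈ S, ∃ x ∈ X t, p = f t + x})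
    (hYY : YY = {p | ∃ t ∈ S, ∃ t' ∈ S, ∃ x ∈ X t', p = f t + x})
    (hfree : ¬ ∃ B : (i : Fin r) → Finset (Fin (d i) → ℝ),
      (∀ i, (B i).card = k) ∧
      {z : (i : Fin r) → Fin (d i) → ℝ | ∀ i, z i ∈ B i} ⊆ XX) :
    (∀ B : Finset ((i : Fin r) → Fin (d i) → ℝ),
      ↑B ⊆ YY → ∃ v, ∀ b ∈ B, v + b ∈ XX) ∧
    ¬ ∃ B : (i : Fin r) → Finset (Fin (d i) → ℝ),
      (∀ i, (B i).card = k) ∧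
      {z : (i : Fin r) → Fin (d i) → ℝ | ∀ i, z i ∈ B i} ⊆ YY := by
  classical
  have main : ∀ B : Finset ((i : Fin r) → Fin (d i) → ℝ),
      ↑B ⊆ YY → ∃ v, ∀ b ∈ B, v + b ∈ XX := by
    intro B hB
    have hB' : ∀ b : B, ∃ t, t ∈ S ∧ ∃ t', t' ∈ S ∧ ∃ x, x ∈ X t' ∧ (b : _) = f t + x := by
      intro b
      have := hB b.2
      rw [hYY] at this
      obtain ⟨t, ht, t', ht', x, hx, hb⟩ := this
      exact ⟨t, ht, t', ht', x, hx, hb⟩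
    choose T hT T' hT' x hx hb using hB'
    set e : Fin B.card → B := fun i => B.equivFin.symm i with he
    obtain ⟨a, ha1, ha2⟩ := hnest B.card (fun i => T' (e i)) (fun i => T (e i))
      (fun i => hT' (e i)) (fun i => hT (e i))
    refine ⟨f a + c, ?_⟩
    intro b hbB
    set bb : B := ⟨b, hbB⟩
    set i : Fin B.card := B.equivFin bb with hi
    have hei : e i = bb := by simp [he, hi]
    rw [hXX]
    refine ⟨T bb + a, by simpa [hei] using ha1 i, x bb, ?_, ?_⟩
    · have := ha2 i
      rw [hei] at this
      exact this (hx bb)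
    · have hfa : f (T bb + a) = f (T bb) + f a + c := hf _ _
      have hbeq : b = f (T bb) + x bb := hb bb
      rw [hfa, hbeq]
      abel
  refine ⟨main, ?_⟩
  rintro ⟨B, hcard, hsub⟩
  set G : Finset ((i : Fin r) → Fin (d i) → ℝ) := Fintype.piFinset B with hG
  have hGY : ↑G ⊆ YY := by
    intro z hz
    apply hsub
    intro i
    exact (Fintype.mem_piFinset.mp hz) i
  obtain ⟨v, hv⟩ := main G hGY
  apply hfree
  refine ⟨fun i => (B i).image (fun y => v i + y), ?_, ?_⟩
  · intro i
    rw [Finset.card_image_of_injective _ (add_right_injective (v i))]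
    exact hcard i
  · intro z hz
    have : ∀ i, ∃ y ∈ B i, v i + y = z i := by
      intro i
      have h := hz i
      rw [Finset.mem_image] at h
      exact h
    choose y hy hvy using this
    have hyG : y ∈ G := Fintype.mem_piFinset.mpr hy
    have : z = v + y := by
      funext i
      exact (hvy i).symm
    rw [this]
    exact hv y hyG
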